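/- Fix an odd integer b = 2k+1 with k ≥ 1, ρ ∈ [0,1), and γ ∈ (0,1]. Define T(u) = ρ·γ·u + (1-ρ)·f_b(γ·u) for u ∈ [0,1], and α = γ·(ρ + (1-ρ)·f_b'(0)) where f_b'(0) = b·C(b-1,(b-1)/2)/2^{b-1}. If α ≤ 1, then for every μ₀ ∈ [0,1], the iterated sequence defined by μ_{t+1} = T(μ_t) converges to 0 as t → ∞. -/

import Mathlib

open Finset Filter

/-- The upper binomial tail `F(p) = ∑_{j=k+1}^{2k+1} C(2k+1,j) p^j (1-p)^{2k+1-j}`. -/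
noncomputable def majF (k : ℕ) (p : ℝ) : ℝ :=
  ∑ j ∈ Finset.Icc (k + 1) (2 * k + 1),
    (Nat.choose (2 * k + 1) j : ℝ) * p ^ j * (1 - p) ^ (2 * k + 1 - j)

/-- The majority map `f_b(u) = 2 F((1+u)/2) - 1` for odd fan-in `b = 2k+1`. -/
noncomputable def majMap (k : ℕ) (u : ℝ) : ℝ :=
  2 * majF k ((1 + u) / 2) - 1

/-- The one-layer recursion map `T(u) = ρ γ u + (1-ρ) f_b(γ u)` for fan-in `b = 2k+1`. -/
noncomputable def Tmap (k : ℕ) (ρ γ u : ℝ) : ℝ :=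
  ρ * γ * u + (1 - ρ) * majMap k (γ * u)

/-- The derivative of the majority map at the origin:
`f_b'(0) = b C(b-1,(b-1)/2)/2^{b-1} = (2k+1) C(2k,k)/2^{2k}`. -/
noncomputable def majPrimeZero (k : ℕ) : ℝ :=
  (2 * k + 1 : ℝ) * (Nat.choose (2 * k) k : ℝ) / 2 ^ (2 * k)

/-- The effective per-layer gain `α = γ (ρ + (1-ρ) f_b'(0))`. -/
noncomputable def alphaGain (k : ℕ) (ρ γ : ℝ) : ℝ :=
  γ * (ρ + (1 - ρ) * majPrimeZero k)

lemma majF_hasDerivAt (k : ℕ) (p : ℝ) :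
    HasDerivAt (majF k)
      ((2 * k + 1 : ℝ) * (Nat.choose (2 * k) k : ℝ) * (p ^ k * (1 - p) ^ k)) p := by
  set n := 2 * k + 1 with hn
  set A : ℕ → ℝ := fun j => (Nat.choose n j : ℝ) * j * p ^ (j - 1) * (1 - p) ^ (n - j) with hA
  have hterm : ∀ j ∈ Finset.Icc (k + 1) n,
      HasDerivAt (fun q : ℝ => (Nat.choose n j : ℝ) * q ^ j * (1 - q) ^ (n - j))
        (A j - A (j + 1)) p := by
    intro j hj
    simp only [Finset.mem_Icc] at hj
    have h1 : HasDerivAt (fun q : ℝ => q ^ j) ((j : ℝ) * p ^ (j - 1)) p := hasDerivAt_pow j p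
    have h0 : HasDerivAt (fun q : ℝ => 1 - q) (-1) p := by
      simpa using (hasDerivAt_const p (1 : ℝ)).fun_sub (hasDerivAt_id p)
    have h2 : HasDerivAt (fun q : ℝ => (1 - q) ^ (n - j))
        ((((n - j : ℕ) : ℝ) * (1 - p) ^ (n - j - 1)) * (-1)) p :=
      (hasDerivAt_pow (n - j) (1 - p)).comp p h0
    have h3 := (h1.fun_mul h2).const_mul ((Nat.choose n j : ℝ))
    have hcast : ((Nat.choose n (j + 1) : ℝ)) * ((j + 1 : ℕ) : ℝ)
        = (Nat.choose n j : ℝ) * ((n - j : ℕ) : ℝ) := by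
      rw [← Nat.cast_mul, ← Nat.cast_mul, Nat.choose_succ_right_eq n j]
    have hsub : n - (j + 1) = n - j - 1 := by omega
    have hj1 : (j + 1) - 1 = j := by omega
    have hAj1 : A (j + 1)
        = (Nat.choose n j : ℝ) * ((n - j : ℕ) : ℝ) * p ^ j * (1 - p) ^ (n - j - 1) :=
      calc A (j + 1)
          = ((Nat.choose n (j + 1) : ℝ) * ((j + 1 : ℕ) : ℝ)) * (p ^ j * (1 - p) ^ (n - j - 1)) := by
            rw [hA]; simp only [hj1, hsub]; ring
        _ = ((Nat.choose n j : ℝ) * ((n - j : ℕ) : ℝ)) * (p ^ j * (1 - p) ^ (n - j - 1)) := by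
            rw [hcast]
        _ = _ := by ring
    have h4 := h3.congr_deriv (show _ = A j - A (j + 1) by rw [hAj1]; simp only [hA]; ring)
    refine h4.congr_of_eventuallyEq (Filter.Eventually.of_forall fun q => ?_)
    simp only [Pi.mul_apply]; ring
  have hsum : HasDerivAt (majF k) (∑ j ∈ Finset.Icc (k + 1) n, (A j - A (j + 1))) p :=
    HasDerivAt.fun_sum hterm
  have htel : ∑ j ∈ Finset.Icc (k + 1) n, (A j - A (j + 1)) = A (k + 1) - A (2 * k + 2) := by
    rw [← Finset.Ico_add_one_right_eq_Icc, Finset.sum_Ico_eq_sum_range]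
    have h2 : n + 1 - (k + 1) = k + 1 := by omega
    rw [h2]
    have := Finset.sum_range_sub' (fun i => A (k + 1 + i)) (k + 1)
    simpa [show k + 1 + (k + 1) = 2 * k + 2 by omega, show k + 1 + k + 1 = 2 * k + 2 by omega, ← add_assoc] using this
  rw [htel] at hsum
  have hA2 : A (2 * k + 2) = 0 := by
    rw [hA]
    have : Nat.choose n (2 * k + 2) = 0 := Nat.choose_eq_zero_of_lt (by omega)
    simp [this]
  have hc : Nat.choose n (k + 1) * (k + 1) = (2 * k + 1) * Nat.choose (2 * k) k := by
    simpa [Nat.succ_eq_add_one, hn] using (Nat.add_one_mul_choose_eq (2 * k) k).symm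
  have hA1 : A (k + 1) = (2 * k + 1 : ℝ) * (Nat.choose (2 * k) k : ℝ) * (p ^ k * (1 - p) ^ k) := by
    have h1 : (k + 1) - 1 = k := by omega
    have h2 : n - (k + 1) = k := by omega
    have hcast : ((Nat.choose n (k + 1) : ℝ)) * ((k + 1 : ℕ) : ℝ)
        = ((2 * k + 1 : ℕ) : ℝ) * ((Nat.choose (2 * k) k : ℕ) : ℝ) := by
      rw [← Nat.cast_mul, ← Nat.cast_mul, hc]
    calc A (k + 1)
        = ((Nat.choose n (k + 1) : ℝ) * ((k + 1 : ℕ) : ℝ)) * (p ^ k * (1 - p) ^ k) := by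
          rw [hA]; simp only [h1, h2]; ring
      _ = (((2 * k + 1 : ℕ) : ℝ) * ((Nat.choose (2 * k) k : ℕ) : ℝ)) * (p ^ k * (1 - p) ^ k) := by
          rw [hcast]
      _ = _ := by push_cast; ring
  rw [hA2, hA1, sub_zero] at hsum
  exact hsum

lemma majF_half (k : ℕ) : majF k (1 / 2 : ℝ) = 1 / 2 := by
  unfold majF
  have h1 : ∀ j ∈ Finset.Icc (k + 1) (2 * k + 1),
      (Nat.choose (2 * k + 1) j : ℝ) * (1 / 2 : ℝ) ^ j * (1 - 1 / 2) ^ (2 * k + 1 - j)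
      = (Nat.choose (2 * k + 1) j : ℝ) * (1 / 2) ^ (2 * k + 1) := by
    intro j hj
    simp only [Finset.mem_Icc] at hj
    rw [show (1 : ℝ) - 1 / 2 = 1 / 2 by norm_num, mul_assoc, ← pow_add,
      show j + (2 * k + 1 - j) = 2 * k + 1 by omega]
  rw [Finset.sum_congr rfl h1, ← Finset.sum_mul]
  have h2 : ∑ j ∈ Finset.Icc (k + 1) (2 * k + 1), (Nat.choose (2 * k + 1) j : ℝ) = 4 ^ k := by
    rw [← Finset.Ico_add_one_right_eq_Icc, Finset.sum_Ico_eq_sub _ (by omega)]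
    have ha : ∑ j ∈ Finset.range (2 * k + 1 + 1), (Nat.choose (2 * k + 1) j : ℝ) = 2 ^ (2 * k + 1) := by
      rw [← Nat.cast_sum]
      exact_mod_cast congrArg (Nat.cast (R := ℝ)) (Nat.sum_range_choose (2 * k + 1))
    have hb : ∑ j ∈ Finset.range (k + 1), (Nat.choose (2 * k + 1) j : ℝ) = 4 ^ k := by
      rw [← Nat.cast_sum]
      exact_mod_cast congrArg (Nat.cast (R := ℝ)) (Nat.sum_range_choose_halfway k)
    rw [ha, hb]
    have : (2 : ℝ) ^ (2 * k + 1) = 2 * 4 ^ k := by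
      rw [pow_succ, pow_mul]; norm_num; ring
    rw [this]; ring
  rw [h2]
  have h4 : (4 : ℝ) ^ k ≠ 0 := by positivity
  rw [show (1 / 2 : ℝ) ^ (2 * k + 1) = 1 / (2 * 4 ^ k) by
    rw [div_pow, one_pow, pow_succ, pow_mul]; norm_num; ring]
  field_simp

lemma majMap_zero (k : ℕ) : majMap k 0 = 0 := by
  unfold majMap
  norm_num [majF_half k]

lemma majMap_hasDerivAt (k : ℕ) (u : ℝ) :
    HasDerivAt (majMap k)
      ((2 * k + 1 : ℝ) * (Nat.choose (2 * k) k : ℝ) * (((1 - u ^ 2) / 4) ^ k)) u := by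
  have h0 : HasDerivAt (fun u : ℝ => (1 + u) / 2) (1 / 2) u := by
    simpa using ((hasDerivAt_const u (1 : ℝ)).add (hasDerivAt_id u)).div_const 2
  have h := ((majF_hasDerivAt k ((1 + u) / 2)).comp u h0).const_mul 2
  have h2 := h.sub_const 1
  refine h2.congr_deriv ?_
  have hp : (1 : ℝ) - (1 + u) / 2 = (1 - u) / 2 := by ring
  rw [hp, ← mul_pow, show ((1 + u) / 2) * ((1 - u) / 2) = (1 - u ^ 2) / 4 by ring]
  ring

lemma majPrimeZero_pos (k : ℕ) : 0 < majPrimeZero k := by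
  unfold majPrimeZero
  have : 0 < Nat.choose (2 * k) k := Nat.choose_pos (by omega)
  positivity

lemma majMap_deriv_eq (k : ℕ) (u : ℝ) :
    deriv (majMap k) u
      = (2 * k + 1 : ℝ) * (Nat.choose (2 * k) k : ℝ) * (((1 - u ^ 2) / 4) ^ k) :=
  (majMap_hasDerivAt k u).deriv

lemma majMap_continuous (k : ℕ) : Continuous (majMap k) :=
  continuous_iff_continuousAt.mpr fun u => (majMap_hasDerivAt k u).differentiableAt.continuousAt

lemma majMap_nonneg (k : ℕ) {v : ℝ} (hv0 : 0 ≤ v) (hv1 : v ≤ 1) : 0 ≤ majMap k v := by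
  have hmono : MonotoneOn (majMap k) (Set.Icc (0 : ℝ) 1) := by
    apply monotoneOn_of_deriv_nonneg (convex_Icc 0 1) (majMap_continuous k).continuousOn
      (fun x _ => (majMap_hasDerivAt k x).differentiableAt.differentiableWithinAt)
    intro x hx
    rw [interior_Icc, Set.mem_Ioo] at hx
    rw [majMap_deriv_eq]
    have h1 : (0 : ℝ) ≤ (1 - x ^ 2) / 4 := by nlinarith [hx.1, hx.2]
    positivity
  have := hmono (Set.mem_Icc.mpr ⟨le_refl 0, zero_le_one⟩) (Set.mem_Icc.mpr ⟨hv0, hv1⟩) hv0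
  rwa [majMap_zero] at this

lemma majMap_lt (k : ℕ) (hk : 1 ≤ k) {v : ℝ} (hv0 : 0 < v) (hv1 : v ≤ 1) :
    majMap k v < majPrimeZero k * v := by
  set φ : ℝ → ℝ := fun u => majMap k u - majPrimeZero k * u with hφ
  have hφd : ∀ u : ℝ, HasDerivAt φ
      ((2 * k + 1 : ℝ) * (Nat.choose (2 * k) k : ℝ) * (((1 - u ^ 2) / 4) ^ k) - majPrimeZero k) u :=
    fun u => by
      simpa using (majMap_hasDerivAt k u).fun_sub ((hasDerivAt_id u).const_mul (majPrimeZero k))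
  have hanti : StrictAntiOn φ (Set.Icc (0 : ℝ) 1) := by
    apply strictAntiOn_of_deriv_neg (convex_Icc 0 1)
    · exact (((majMap_continuous k).sub (continuous_const.mul continuous_id)).continuousOn)
    · intro x hx
      rw [interior_Icc, Set.mem_Ioo] at hx
      rw [(hφd x).deriv]
      have hc : (0 : ℝ) < (2 * k + 1 : ℝ) * (Nat.choose (2 * k) k : ℝ) := by
        have : 0 < Nat.choose (2 * k) k := Nat.choose_pos (by omega)
        positivity
      have hlt : ((1 - x ^ 2) / 4 : ℝ) ^ k < (1 / 4 : ℝ) ^ k := by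
        apply pow_lt_pow_left₀ _ (by nlinarith [hx.1, hx.2]) (by omega)
        nlinarith [hx.1, hx.2]
      have hmp : majPrimeZero k = (2 * k + 1 : ℝ) * (Nat.choose (2 * k) k : ℝ) * (1 / 4 : ℝ) ^ k := by
        unfold majPrimeZero
        rw [div_pow, one_pow, pow_mul]
        norm_num
        ring
      rw [hmp]
      nlinarith [hlt, hc]
  have hv01 : v ∈ Set.Icc (0 : ℝ) 1 := ⟨le_of_lt hv0, hv1⟩
  have h0 : (0 : ℝ) ∈ Set.Icc (0 : ℝ) 1 := ⟨le_refl 0, zero_le_one⟩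
  have := hanti h0 hv01 hv0
  simp only [hφ, majMap_zero, mul_zero, sub_zero] at this
  linarith

/-- Subcritical collapse: if `α ≤ 1`, the iterates of `T` from any `μ₀ ∈ [0,1]`
converge to `0`. -/
theorem subcritical_collapse (k : ℕ) (hk : 1 ≤ k) (ρ γ : ℝ)
    (hρ : ρ ∈ Set.Ico (0 : ℝ) 1) (hγ : γ ∈ Set.Ioc (0 : ℝ) 1)
    (hα : alphaGain k ρ γ ≤ 1) :
    ∀ μ₀ ∈ Set.Icc (0 : ℝ) 1, ∀ seq : ℕ → ℝ,
      seq 0 = μ₀ → (∀ t, seq (t + 1) = Tmap k ρ γ (seq t)) →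
      Tendsto seq atTop (nhds 0) := by
  intro μ₀ hμ₀ seq hs0 hrec
  obtain ⟨hρ0, hρ1⟩ := hρ
  obtain ⟨hγ0, hγ1⟩ := hγ
  have h1ρ : 0 < 1 - ρ := by linarith
  -- T(0) = 0
  have hT0 : Tmap k ρ γ 0 = 0 := by
    simp [Tmap, majMap_zero k]
  -- strict decrease on (0,1]
  have hTlt : ∀ u : ℝ, 0 < u → u ≤ 1 → Tmap k ρ γ u < u := by
    intro u hu0 hu1
    have hγu0 : 0 < γ * u := mul_pos hγ0 hu0
    have hγu1 : γ * u ≤ 1 := by nlinarith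
    have hmaj := majMap_lt k hk hγu0 hγu1
    have h2 : (1 - ρ) * majMap k (γ * u) < (1 - ρ) * (majPrimeZero k * (γ * u)) :=
      mul_lt_mul_of_pos_left hmaj h1ρ
    have h3 : ρ * γ * u + (1 - ρ) * (majPrimeZero k * (γ * u)) = alphaGain k ρ γ * u := by
      unfold alphaGain; ring
    have h4 : alphaGain k ρ γ * u ≤ u := by
      nlinarith
    unfold Tmap
    linarith
  -- nonnegativity on [0,1]
  have hTnn : ∀ u : ℝ, 0 ≤ u → u ≤ 1 → 0 ≤ Tmap k ρ γ u := by
    intro u hu0 hu1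
    have hγu0 : 0 ≤ γ * u := mul_nonneg (le_of_lt hγ0) hu0
    have hγu1 : γ * u ≤ 1 := by nlinarith
    have hmaj := majMap_nonneg k hγu0 hγu1
    have := mul_nonneg (le_of_lt h1ρ) hmaj
    have : 0 ≤ ρ * γ * u := by positivity
    unfold Tmap
    nlinarith [mul_nonneg (le_of_lt h1ρ) hmaj]
  have hTle : ∀ u : ℝ, 0 ≤ u → u ≤ 1 → Tmap k ρ γ u ≤ u := by
    intro u hu0 hu1
    rcases eq_or_lt_of_le hu0 with h | h
    · rw [← h, hT0]
    · exact le_of_lt (hTlt u h hu1)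
  -- membership
  have hmem : ∀ t, seq t ∈ Set.Icc (0 : ℝ) 1 := by
    intro t
    induction t with
    | zero => rw [hs0]; exact hμ₀
    | succ t ih =>
      obtain ⟨ih0, ih1⟩ := ih
      rw [hrec t]
      exact ⟨hTnn _ ih0 ih1, le_trans (hTle _ ih0 ih1) ih1⟩
  -- antitone
  have hanti : Antitone seq := by
    apply antitone_nat_of_succ_le
    intro t
    rw [hrec t]
    exact hTle _ (hmem t).1 (hmem t).2
  have hbdd : BddBelow (Set.range seq) := ⟨0, fun x ⟨t, ht⟩ => ht ▸ (hmem t).1⟩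
  set L := ⨅ t, seq t with hL
  have hlim : Tendsto seq atTop (nhds L) := tendsto_atTop_ciInf hanti hbdd
  have hL0 : 0 ≤ L := le_ciInf fun t => (hmem t).1
  have hL1 : L ≤ 1 := le_trans (ciInf_le hbdd 0) ((hmem 0).2)
  -- fixed point
  have hshift : Tendsto (fun t => seq (t + 1)) atTop (nhds L) :=
    hlim.comp (tendsto_add_atTop_nat 1)
  have hcontT : Continuous (Tmap k ρ γ) := by
    unfold Tmap
    exact ((continuous_const.mul continuous_id).add
      (continuous_const.mul ((majMap_continuous k).comp (continuous_const.mul continuous_id))))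
  have hTlim : Tendsto (fun t => Tmap k ρ γ (seq t)) atTop (nhds (Tmap k ρ γ L)) :=
    (hcontT.tendsto L).comp hlim
  have hfix : Tmap k ρ γ L = L := by
    have : Tendsto (fun t => seq (t + 1)) atTop (nhds (Tmap k ρ γ L)) := by
      simpa [hrec] using hTlim
    exact tendsto_nhds_unique this hshift
  have hLz : L = 0 := by
    by_contra h
    have hLpos : 0 < L := lt_of_le_of_ne hL0 (Ne.symm h)
    exact absurd hfix (ne_of_lt (hTlt L hLpos hL1))
  rwa [hLz] at hlim
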